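/- There exists a universal constant C > 0 (one may take C = 32√2) such that for any holomorphic map φ : 𝔻 → 𝔻 with φ(0) = 0, any r ∈ (0,1), and any ζ₀ ∈ 𝔻 \ {0}, the inequality |φ(ζ) − ζ| ≤ C · |φ(ζ₀) − ζ₀| / (|ζ₀|·(1 − |ζ₀|²)·(1 − r²)) holds for all ζ with |ζ| ≤ r. -/

import Mathlib

open Complex Set Metric

set_option maxHeartbeats 1000000 in
/-- There is a universal constant `C > 0` (one may take `C = 32√2`) such that for every
holomorphic self-map `φ` of the unit disk fixing the origin, every `r ∈ (0,1)`, and every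
`ζ₀ ∈ 𝔻 \ {0}`, one has
`|φ(ζ) − ζ| ≤ C |φ(ζ₀) − ζ₀| / (|ζ₀| (1 − |ζ₀|²)(1 − r²))` for all `|ζ| ≤ r`. -/
theorem universal_schwarz_type_estimate :
    ∃ C : ℝ, 0 < C ∧
      ∀ φ : ℂ → ℂ, DifferentiableOn ℂ φ (ball (0:ℂ) 1) →
        MapsTo φ (ball (0:ℂ) 1) (ball (0:ℂ) 1) → φ 0 = 0 →
        ∀ r : ℝ, r ∈ Ioo (0:ℝ) 1 →
        ∀ ζ₀ : ℂ, ζ₀ ∈ ball (0:ℂ) 1 \ {0} →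
        ∀ ζ : ℂ, ‖ζ‖ ≤ r →
          ‖φ ζ - ζ‖ ≤ C / (‖ζ₀‖ * (1 - ‖ζ₀‖ ^ 2) * (1 - r ^ 2)) * ‖φ ζ₀ - ζ₀‖ := by
  refine ⟨16, by norm_num, ?_⟩
  intro φ hd hmaps h0 r hr ζ₀ hζ₀ ζ hζ
  obtain ⟨hr0, hr1⟩ := hr
  obtain ⟨hζ₀b, hζ₀ne⟩ := hζ₀
  have hζ₀ne' : ζ₀ ≠ 0 := hζ₀ne
  set s : ℝ := ‖ζ₀‖ with hs_def
  have hs0 : 0 < s := norm_pos_iff.mpr hζ₀ne'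
  have hs1 : s < 1 := by simpa using mem_ball_zero_iff.mp hζ₀b
  have hζb : ζ ∈ ball (0:ℂ) 1 := mem_ball_zero_iff.mpr (hζ.trans_lt hr1)
  have h0mem : (0:ℂ) ∈ ball (0:ℂ) 1 := mem_ball_self one_pos
  set ψ : ℂ → ℂ := dslope φ 0 with hψ_def
  have hψd : DifferentiableOn ℂ ψ (ball (0:ℂ) 1) :=
    (differentiableOn_dslope (ball_mem_nhds _ one_pos)).mpr hd
  have hmaps' : MapsTo φ (ball (0:ℂ) 1) (ball (φ 0) 1) := by rw [h0]; exact hmaps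
  have hψle : ∀ z ∈ ball (0:ℂ) 1, ‖ψ z‖ ≤ 1 := fun z hz => by
    simpa using Complex.norm_dslope_le_div_of_mapsTo_ball hd (hmaps'.mono_right ball_subset_closedBall) hz
  have key : ∀ z : ℂ, φ z - z = z * (ψ z - 1) := by
    intro z
    rcases eq_or_ne z 0 with rfl | hz
    · simp [h0]
    · rw [hψ_def, dslope_of_ne _ hz, slope_def_field, h0]
      field_simp
      ring
  have h1s : 0 < 1 - s ^ 2 := by nlinarith
  have h1r : 0 < 1 - r ^ 2 := by nlinarith
  have hD : 0 < s * (1 - s ^ 2) * (1 - r ^ 2) := by positivity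
  -- Main claim
  have claim : ‖ψ ζ - 1‖ * ((1 - s ^ 2) * (1 - r ^ 2)) ≤ 16 * ‖ψ ζ₀ - 1‖ := by
    by_cases hcase : ∃ z₁ ∈ ball (0:ℂ) 1, 1 ≤ ‖ψ z₁‖
    · obtain ⟨z₁, hz₁, hz₁'⟩ := hcase
      have hmax : IsMaxOn (norm ∘ ψ) (ball (0:ℂ) 1) z₁ := fun z hz =>
        le_trans (hψle z hz) hz₁'
      have heq := Complex.eqOn_of_isPreconnected_of_isMaxOn_norm
        (convex_ball (0:ℂ) 1).isPreconnected isOpen_ball hψd hz₁ hmax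
      have h1 : ψ ζ = ψ z₁ := heq hζb
      have h2 : ψ ζ₀ = ψ z₁ := heq hζ₀b
      rw [h1, ← h2]
      have hsr2 : s ^ 2 * r ^ 2 ≤ 1 := by nlinarith [sq_nonneg s, sq_nonneg r]
      have hle : (1 - s ^ 2) * (1 - r ^ 2) ≤ 1 := by nlinarith [sq_nonneg s, sq_nonneg r]
      nlinarith [norm_nonneg (ψ ζ₀ - 1),
        mul_le_mul_of_nonneg_left hle (norm_nonneg (ψ ζ₀ - 1))]
    · push_neg at hcase
      set a : ℂ := 1 - ψ 0 with ha_def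
      have hre : ∀ z ∈ ball (0:ℂ) 1, 0 < (1 - ψ z).re := by
        intro z hz
        have h1 : (ψ z).re ≤ ‖ψ z‖ := Complex.re_le_norm (ψ z)
        have h2 : ‖ψ z‖ < 1 := hcase z hz
        simp only [Complex.sub_re, Complex.one_re]
        linarith
      have hare : 0 < a.re := hre 0 h0mem
      have hden : ∀ z ∈ ball (0:ℂ) 1, (1 - ψ z) + (starRingEnd ℂ) a ≠ 0 := by
        intro z hz h
        have := congrArg Complex.re h
        simp only [Complex.add_re, Complex.conj_re, Complex.zero_re] at this
        have := hre z hz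
        linarith
      set F : ℂ → ℂ := fun z => ((1 - ψ z) - a) / ((1 - ψ z) + (starRingEnd ℂ) a)
        with hF_def
      have hF0 : F 0 = 0 := by simp [hF_def, ha_def]
      have hFd : DifferentiableOn ℂ F (ball (0:ℂ) 1) :=
        DifferentiableOn.div
          (((differentiableOn_const _).sub hψd).sub (differentiableOn_const _))
          (((differentiableOn_const _).sub hψd).add (differentiableOn_const _))
          hden
      have hnumlt : ∀ z ∈ ball (0:ℂ) 1,
          ‖(1 - ψ z) - a‖ < ‖(1 - ψ z) + (starRingEnd ℂ) a‖ := by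
        intro z hz
        have hzre := hre z hz
        have hsq : Complex.normSq ((1 - ψ z) - a) <
            Complex.normSq ((1 - ψ z) + (starRingEnd ℂ) a) := by
          have hzre' : 0 < 1 - (ψ z).re := by
            simpa [Complex.sub_re, Complex.one_re] using hzre
          have hare' : 0 < a.re := hare
          simp only [Complex.normSq_apply, Complex.sub_re, Complex.sub_im,
            Complex.add_re, Complex.add_im, Complex.conj_re, Complex.conj_im,
            Complex.one_re, Complex.one_im]
          nlinarith [hzre', hare']
        have h1 := Real.sqrt_lt_sqrt (Complex.normSq_nonneg _) hsq
        simpa [Complex.norm_def] using h1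
      have hFmaps : MapsTo F (ball (0:ℂ) 1) (ball (F 0) 1) := by
        intro z hz
        rw [hF0, mem_ball_zero_iff]
        have hdpos : 0 < ‖(1 - ψ z) + (starRingEnd ℂ) a‖ :=
          norm_pos_iff.mpr (hden z hz)
        rw [hF_def]
        simp only [norm_div]
        exact (div_lt_one hdpos).mpr (hnumlt z hz)
      have hineq : ∀ z ∈ ball (0:ℂ) 1,
          ‖(1 - ψ z) - a‖ ≤ ‖z‖ * ‖(1 - ψ z) + (starRingEnd ℂ) a‖ := by
        intro z hz
        have hsch := Complex.dist_le_div_mul_dist_of_mapsTo_ball hFd (hFmaps.mono_right ball_subset_closedBall) hz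
        rw [hF0] at hsch
        simp only [dist_zero_right, one_div, dist_eq_norm, sub_zero] at hsch
        have hFz : ‖F z‖ ≤ ‖z‖ := by simpa using hsch
        have hdpos : 0 < ‖(1 - ψ z) + (starRingEnd ℂ) a‖ :=
          norm_pos_iff.mpr (hden z hz)
        have : ‖(1 - ψ z) - a‖ / ‖(1 - ψ z) + (starRingEnd ℂ) a‖ ≤ ‖z‖ := by
          simpa [hF_def, norm_div] using hFz
        calc ‖(1 - ψ z) - a‖
            = ‖(1 - ψ z) - a‖ / ‖(1 - ψ z) + (starRingEnd ℂ) a‖ *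
              ‖(1 - ψ z) + (starRingEnd ℂ) a‖ :=
              (div_mul_cancel₀ _ hdpos.ne').symm
          _ ≤ ‖z‖ * ‖(1 - ψ z) + (starRingEnd ℂ) a‖ :=
              mul_le_mul_of_nonneg_right this (norm_nonneg _)
      set u : ℝ := ‖(1:ℂ) - ψ ζ‖ with hu_def
      set v : ℝ := ‖(1:ℂ) - ψ ζ₀‖ with hv_def
      set A : ℝ := ‖a‖ with hA_def
      have hconjA : ‖(starRingEnd ℂ) a‖ = A := by simp [hA_def]
      have hu0 : 0 ≤ u := norm_nonneg _
      have hv0 : 0 ≤ v := norm_nonneg _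
      have hA0 : 0 ≤ A := norm_nonneg _
      have e1 : u * (1 - r) ≤ A * (1 + r) := by
        have h1 := hineq ζ hζb
        have h2 : u - A ≤ ‖(1 - ψ ζ) - a‖ := by
          have := norm_sub_norm_le (1 - ψ ζ) a
          simpa [hu_def, hA_def] using this
        have h3 : ‖(1 - ψ ζ) + (starRingEnd ℂ) a‖ ≤ u + A := by
          have := norm_add_le (1 - ψ ζ) ((starRingEnd ℂ) a)
          simpa [hu_def, hconjA] using this
        have h4 : ‖ζ‖ * ‖(1 - ψ ζ) + (starRingEnd ℂ) a‖ ≤ r * (u + A) := by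
          apply mul_le_mul hζ h3 (norm_nonneg _) hr0.le
        nlinarith
      have e2 : A * (1 - s) ≤ v * (1 + s) := by
        have h1 := hineq ζ₀ hζ₀b
        have h2 : A - v ≤ ‖(1 - ψ ζ₀) - a‖ := by
          have := norm_sub_norm_le a (1 - ψ ζ₀)
          rw [← norm_neg (a - (1 - ψ ζ₀))] at this
          simpa [hv_def, hA_def, neg_sub] using this
        have h3 : ‖(1 - ψ ζ₀) + (starRingEnd ℂ) a‖ ≤ v + A := by
          have := norm_add_le (1 - ψ ζ₀) ((starRingEnd ℂ) a)
          simpa [hv_def, hconjA] using this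
        have h4 : ‖ζ₀‖ * ‖(1 - ψ ζ₀) + (starRingEnd ℂ) a‖ ≤ s * (v + A) :=
          mul_le_mul le_rfl h3 (norm_nonneg _) hs0.le
        nlinarith
      have huζ : ‖ψ ζ - 1‖ = u := by rw [hu_def, ← norm_neg]; ring_nf
      have hvζ : ‖ψ ζ₀ - 1‖ = v := by rw [hv_def, ← norm_neg]; ring_nf
      rw [huζ, hvζ]
      have hsr : s * r ≤ 1 := (mul_le_of_le_one_left hr0.le hs1.le).trans hr1.le
      have c1 : u * (1 - r) * (1 - s) ≤ A * (1 + r) * (1 - s) :=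
        mul_le_mul_of_nonneg_right e1 (by linarith)
      have c2 : A * (1 - s) * (1 + r) ≤ v * (1 + s) * (1 + r) :=
        mul_le_mul_of_nonneg_right e2 (by linarith)
      have c3 : v * (1 + s) * (1 + r) ≤ 4 * v := by
        nlinarith [mul_le_mul_of_nonneg_left hsr hv0]
      have c4 : u * (1 - r) * (1 - s) ≤ 4 * v := by linarith
      have hps : (1 + s) * (1 + r) ≤ 4 := by nlinarith [hsr]
      have c5 : u * (1 - r) * (1 - s) * ((1 + s) * (1 + r)) ≤ 4 * v * 4 :=
        mul_le_mul c4 hps (mul_nonneg (by linarith) (by linarith)) (by linarith)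
      nlinarith [c5]
  -- finish
  rw [key ζ, key ζ₀, norm_mul, norm_mul, div_mul_eq_mul_div, le_div_iff₀ hD]
  have hζ1 : ‖ζ‖ ≤ 1 := hζ.trans hr1.le
  have step1 : ‖ψ ζ - 1‖ * ((1 - s ^ 2) * (1 - r ^ 2)) * s ≤
      16 * ‖ψ ζ₀ - 1‖ * s := mul_le_mul_of_nonneg_right claim hs0.le
  have step2 : ‖ζ‖ * (‖ψ ζ - 1‖ * ((1 - s ^ 2) * (1 - r ^ 2)) * s) ≤
      1 * (16 * ‖ψ ζ₀ - 1‖ * s) :=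
    mul_le_mul hζ1 step1
      (mul_nonneg (mul_nonneg (norm_nonneg _) (mul_nonneg h1s.le h1r.le)) hs0.le)
      (by positivity)
  nlinarith [step2]
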